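/- Universal approximation theorem for hypercomplex-valued MLP networks: Let n, N ≥ 1, let V = ℝⁿ with its standard basis, and let μ : V × V → V be an ℝ-bilinear multiplication such that (i) for every k ∈ {0,…,n−1} the coordinate bilinear form B_k(x,y) = (μ(x,y))_k is non-degenerate, and (ii) there exists a two-sided identity 1_V ∈ V with μ(1_V, x) = x = μ(x, 1_V) for all x ∈ V. Let ψ : ℝ → ℝ be a Tauber–Wiener function such that ψ(t) → 0 as t → −∞ or ψ(t) → 0 as t → +∞, and let Ψ : V → V be the split activation (Ψ(x))_k = ψ(x_k). Then for every compact set K ⊆ Vᴺ, every continuous function f : Vᴺ → V, and every ε > 0, there exist M ∈ ℕ, output weights α₁,…,α_M ∈ V, weights w_{ij} ∈ V (1 ≤ i ≤ M, 1 ≤ j ≤ N), and biases b₁,…,b_M ∈ V such that ‖ Σ_{i=1}^M μ( α_i, Ψ( Σ_{j=1}^N μ(w_{ij}, x_j) + b_i ) ) − f(x) ‖ ≤ ε for all x = (x₁,…,x_N) ∈ K. -/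

import Mathlib

open Filter

/-- `ψ` is a Tauber–Wiener function: every continuous real function can be uniformly
approximated on every closed interval by finite linear combinations of the form
`t ↦ ∑ i, α i * ψ (w i * t + θ i)`. -/
def IsTauberWiener (ψ : ℝ → ℝ) : Prop :=
  ∀ f : ℝ → ℝ, Continuous f → ∀ a b : ℝ, ∀ ε : ℝ, 0 < ε →
    ∃ M : ℕ, ∃ α w θ : Fin M → ℝ,
      ∀ t ∈ Set.Icc a b, |f t - ∑ i, α i * ψ (w i * t + θ i)| ≤ ε

noncomputable section UAT

variable {n N : ℕ}

/-- coordinate bound gives norm bound -/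
lemma euclid_norm_le_of_coord (v : EuclideanSpace ℝ (Fin n)) (C : ℝ) (hC : 0 ≤ C)
    (h : ∀ m, |v m| ≤ C) : ‖v‖ ≤ Real.sqrt n * C := by
  rw [EuclideanSpace.norm_eq]
  have h1 : ∑ m, ‖v m‖ ^ 2 ≤ ∑ _m : Fin n, C ^ 2 := by
    refine Finset.sum_le_sum fun m _ => ?_
    have := h m
    rw [Real.norm_eq_abs]
    nlinarith [abs_nonneg (v m)]
  calc Real.sqrt (∑ m, ‖v m‖ ^ 2) ≤ Real.sqrt (∑ _m : Fin n, C ^ 2) := Real.sqrt_le_sqrt h1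
    _ = Real.sqrt (n * C ^ 2) := by rw [Finset.sum_const]; simp [nsmul_eq_mul]
    _ = Real.sqrt n * C := by
        rw [Real.sqrt_mul (by positivity), Real.sqrt_sq hC]

lemma euclid_sum_single (v : EuclideanSpace ℝ (Fin n)) :
    ∑ k, v k • EuclideanSpace.single k (1:ℝ) = v := by
  ext m
  have h : ∀ w : EuclideanSpace ℝ (Fin n), w m = (fun w : EuclideanSpace ℝ (Fin n) => w m) w :=
    fun _ => rfl
  have hsum : (∑ k, v k • EuclideanSpace.single k (1:ℝ)) m
      = ∑ k, (v k • EuclideanSpace.single k (1:ℝ)) m := by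
    induction (Finset.univ : Finset (Fin n)) using Finset.induction_on with
    | empty => simp
    | insert a s hni ih => rw [Finset.sum_insert hni, Finset.sum_insert hni, ← ih]; rfl
  rw [hsum]
  simp [PiLp.smul_apply, EuclideanSpace.single_apply, smul_eq_mul]

lemma euclid_abs_coord_le (v : EuclideanSpace ℝ (Fin n)) (m : Fin n) : |v m| ≤ ‖v‖ := by
  rw [EuclideanSpace.norm_eq]
  have : |v m| = Real.sqrt (‖v m‖ ^ 2) := by
    rw [Real.sqrt_sq (norm_nonneg _), Real.norm_eq_abs]
  rw [this]
  apply Real.sqrt_le_sqrt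
  exact Finset.single_le_sum (f := fun i => ‖v i‖ ^ 2) (fun i _ => by positivity) (Finset.mem_univ m)


section RA

variable (ψ : ℝ → ℝ) (K : Set (Fin N → EuclideanSpace ℝ (Fin n)))

/-- real network approximability on `K` -/
def RApprox (g : (Fin N → EuclideanSpace ℝ (Fin n)) → ℝ) (ε : ℝ) : Prop :=
  ∃ M : ℕ, ∃ (c : Fin M → ℝ) (ℓ : Fin M → ((Fin N → EuclideanSpace ℝ (Fin n)) →ₗ[ℝ] ℝ))
    (θ : Fin M → ℝ), ∀ x ∈ K, |g x - ∑ i, c i * ψ (ℓ i x + θ i)| ≤ ε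

variable {ψ K}

lemma RApprox.mono {g ε₁ ε₂} (h : RApprox ψ K g ε₁) (hle : ε₁ ≤ ε₂) : RApprox ψ K g ε₂ := by
  obtain ⟨M, c, l, t, h⟩ := h
  exact ⟨M, c, l, t, fun x hx => (h x hx).trans hle⟩

lemma RApprox.zero : RApprox ψ K (fun _ => (0:ℝ)) 0 :=
  ⟨0, ![], ![], ![], fun x _ => by simp⟩

lemma RApprox.add {g₁ g₂ ε₁ ε₂} (h₁ : RApprox ψ K g₁ ε₁) (h₂ : RApprox ψ K g₂ ε₂) :
    RApprox ψ K (fun x => g₁ x + g₂ x) (ε₁ + ε₂) := by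
  obtain ⟨M₁, c₁, l₁, t₁, h₁⟩ := h₁
  obtain ⟨M₂, c₂, l₂, t₂, h₂⟩ := h₂
  refine ⟨M₁ + M₂, Fin.append c₁ c₂, Fin.append l₁ l₂, Fin.append t₁ t₂, fun x hx => ?_⟩
  have hs : ∑ i : Fin (M₁ + M₂),
      Fin.append c₁ c₂ i * ψ (Fin.append l₁ l₂ i x + Fin.append t₁ t₂ i)
      = (∑ i : Fin M₁, c₁ i * ψ (l₁ i x + t₁ i)) + ∑ i : Fin M₂, c₂ i * ψ (l₂ i x + t₂ i) := by
    rw [Fin.sum_univ_add]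
    simp [Fin.append_left, Fin.append_right]
  rw [hs]
  calc |g₁ x + g₂ x - ((∑ i : Fin M₁, c₁ i * ψ (l₁ i x + t₁ i))
      + ∑ i : Fin M₂, c₂ i * ψ (l₂ i x + t₂ i))|
      ≤ |g₁ x - ∑ i : Fin M₁, c₁ i * ψ (l₁ i x + t₁ i)|
        + |g₂ x - ∑ i : Fin M₂, c₂ i * ψ (l₂ i x + t₂ i)| := by
        have := abs_add_le (g₁ x - ∑ i : Fin M₁, c₁ i * ψ (l₁ i x + t₁ i))
          (g₂ x - ∑ i : Fin M₂, c₂ i * ψ (l₂ i x + t₂ i))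
        calc _ = _ := by ring_nf
          _ ≤ _ := this
    _ ≤ ε₁ + ε₂ := add_le_add (h₁ x hx) (h₂ x hx)

lemma RApprox.sum {ι : Type*} (s : Finset ι) (g : ι → (Fin N → EuclideanSpace ℝ (Fin n)) → ℝ)
    (ε : ι → ℝ) (h : ∀ i ∈ s, RApprox ψ K (g i) (ε i)) :
    RApprox ψ K (fun x => ∑ i ∈ s, g i x) (∑ i ∈ s, ε i) := by
  classical
  induction s using Finset.induction_on with
  | empty => simpa using RApprox.zero
  | insert a s hni ih =>
    simp only [Finset.sum_insert hni]
    exact (h a (Finset.mem_insert_self a s)).add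
      (ih fun i hi => h i (Finset.mem_insert_of_mem hi))

lemma RApprox.close {g h ε₁ δ} (hh : RApprox ψ K h ε₁)
    (hgh : ∀ x ∈ K, |g x - h x| ≤ δ) : RApprox ψ K g (ε₁ + δ) := by
  obtain ⟨M, c, l, t, hh⟩ := hh
  refine ⟨M, c, l, t, fun x hx => ?_⟩
  calc |g x - ∑ i, c i * ψ (l i x + t i)|
      = |(g x - h x) + (h x - ∑ i, c i * ψ (l i x + t i))| := by ring_nf
    _ ≤ |g x - h x| + |h x - ∑ i, c i * ψ (l i x + t i)| := abs_add_le _ _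
    _ ≤ δ + ε₁ := add_le_add (hgh x hx) (hh x hx)
    _ = ε₁ + δ := add_comm _ _

lemma RApprox.const_mul {g ε} (c : ℝ) (h : RApprox ψ K g ε) :
    RApprox ψ K (fun x => c * g x) (|c| * ε) := by
  obtain ⟨M, a, l, t, h⟩ := h
  refine ⟨M, fun i => c * a i, l, t, fun x hx => ?_⟩
  have : ∑ i, (c * a i) * ψ (l i x + t i) = c * ∑ i, a i * ψ (l i x + t i) := by
    rw [Finset.mul_sum]; exact Finset.sum_congr rfl fun i _ => by ring
  rw [this, ← mul_sub, abs_mul]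
  exact mul_le_mul_of_nonneg_left (h x hx) (abs_nonneg c)

end RA


section SW

lemma cos_dense (K : Set (Fin N → EuclideanSpace ℝ (Fin n))) (hK : IsCompact K)
    (g : (Fin N → EuclideanSpace ℝ (Fin n)) → ℝ) (hg : Continuous g) (ε : ℝ) (hε : 0 < ε) :
    ∃ M : ℕ, ∃ (c : Fin M → ℝ) (ℓ : Fin M → ((Fin N → EuclideanSpace ℝ (Fin n)) →ₗ[ℝ] ℝ))
      (θ : Fin M → ℝ), ∀ x ∈ K, |g x - ∑ i, c i * Real.cos (ℓ i x + θ i)| ≤ ε := by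
  haveI : CompactSpace K := isCompact_iff_compactSpace.mp hK
  have contl : ∀ (ℓ : (Fin N → EuclideanSpace ℝ (Fin n)) →ₗ[ℝ] ℝ), Continuous ℓ := fun ℓ =>
    ℓ.continuous_of_finiteDimensional
  let nc : ((Fin N → EuclideanSpace ℝ (Fin n)) →ₗ[ℝ] ℝ) → ℝ → C(K, ℝ) := fun ℓ θ =>
    ⟨fun x => Real.cos (ℓ (x : Fin N → EuclideanSpace ℝ (Fin n)) + θ),
     Real.continuous_cos.comp (((contl ℓ).comp continuous_subtype_val).add continuous_const)⟩
  let G : Set C(K, ℝ) := {F | ∃ ℓ θ, F = nc ℓ θ}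
  set S := Submodule.span ℝ G with hS
  have h1 : (1 : C(K, ℝ)) ∈ S := by
    apply Submodule.subset_span
    refine ⟨0, 0, ?_⟩
    ext x; simp [nc]
  have hmulG : ∀ F₁ ∈ G, ∀ F₂ ∈ G, F₁ * F₂ ∈ S := by
    rintro F₁ ⟨ℓ₁, θ₁, rfl⟩ F₂ ⟨ℓ₂, θ₂, rfl⟩
    have key : nc ℓ₁ θ₁ * nc ℓ₂ θ₂ =
        (1/2 : ℝ) • nc (ℓ₁ + ℓ₂) (θ₁ + θ₂) + (1/2 : ℝ) • nc (ℓ₁ - ℓ₂) (θ₁ - θ₂) := by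
      ext x
      simp only [ContinuousMap.mul_apply, ContinuousMap.add_apply, ContinuousMap.smul_apply,
        smul_eq_mul, nc, ContinuousMap.coe_mk, LinearMap.add_apply, LinearMap.sub_apply]
      have c1 := Real.cos_add (ℓ₁ x + θ₁) (ℓ₂ x + θ₂)
      have c2 := Real.cos_sub (ℓ₁ x + θ₁) (ℓ₂ x + θ₂)
      have e1 : ℓ₁ x + ℓ₂ x + (θ₁ + θ₂) = (ℓ₁ x + θ₁) + (ℓ₂ x + θ₂) := by ring
      have e2 : ℓ₁ x - ℓ₂ x + (θ₁ - θ₂) = (ℓ₁ x + θ₁) - (ℓ₂ x + θ₂) := by ring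
      rw [e1, e2, c1, c2]; ring
    rw [key]
    exact Submodule.add_mem _ (Submodule.smul_mem _ _ (Submodule.subset_span ⟨_, _, rfl⟩))
      (Submodule.smul_mem _ _ (Submodule.subset_span ⟨_, _, rfl⟩))
  have step1 : ∀ F ∈ G, ∀ a, a ∈ S → a * F ∈ S := by
    intro F hF a ha
    induction ha using Submodule.span_induction with
    | mem y hy => exact hmulG y hy F hF
    | zero => rw [zero_mul]; exact S.zero_mem
    | add y z hy hz hy' hz' => rw [add_mul]; exact Submodule.add_mem _ hy' hz'
    | smul r y hy hy' => rw [smul_mul_assoc]; exact Submodule.smul_mem _ _ hy'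
  have hmul : ∀ a b : C(K, ℝ), a ∈ S → b ∈ S → a * b ∈ S := by
    intro a b ha hb
    induction hb using Submodule.span_induction with
    | mem y hy => exact step1 y hy a ha
    | zero => rw [mul_zero]; exact S.zero_mem
    | add y z hy hz hy' hz' => rw [mul_add]; exact Submodule.add_mem _ hy' hz'
    | smul r y hy hy' => rw [mul_smul_comm]; exact Submodule.smul_mem _ _ hy'
  set A := S.toSubalgebra h1 hmul with hA
  have hsep : A.SeparatesPoints := by
    rintro x y hxy
    have hxyE : (x : Fin N → EuclideanSpace ℝ (Fin n)) - (y : Fin N → EuclideanSpace ℝ (Fin n)) ≠ 0 :=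
      sub_ne_zero.mpr (fun h => hxy (Subtype.ext h))
    obtain ⟨φ, hφ1, hφ2⟩ := exists_dual_vector ℝ _ (norm_ne_zero_iff.mpr hxyE)
    set a := φ (x : Fin N → EuclideanSpace ℝ (Fin n)) with ha'
    set b := φ (y : Fin N → EuclideanSpace ℝ (Fin n)) with hb'
    have hab : a ≠ b := by
      intro h
      have hne : ‖(x : Fin N → EuclideanSpace ℝ (Fin n)) - (y : Fin N → EuclideanSpace ℝ (Fin n))‖ ≠ 0 :=
        norm_ne_zero_iff.mpr hxyE
      have h0 : φ ((x : Fin N → EuclideanSpace ℝ (Fin n)) - (y : Fin N → EuclideanSpace ℝ (Fin n))) = 0 := by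
        rw [map_sub, ← ha', ← hb', h, sub_self]
      rw [h0] at hφ2
      exact hne (by exact_mod_cast hφ2.symm)
    have hden : (0:ℝ) < |a| + |b| + 1 := by positivity
    set r := Real.pi / (2 * (|a| + |b| + 1)) with hr
    have hrpos : 0 < r := div_pos Real.pi_pos (by linarith)
    have hbound : ∀ t : ℝ, |t| ≤ |a| + |b| → r * t + Real.pi/2 ∈ Set.Icc 0 Real.pi := by
      intro t ht
      have h1 : |r * t| ≤ Real.pi / 2 := by
        rw [abs_mul, abs_of_pos hrpos, hr, div_mul_eq_mul_div, div_le_div_iff₀ (by linarith) two_pos]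
        have : |t| ≤ |a| + |b| + 1 := by linarith
        nlinarith [Real.pi_pos]
      have := abs_le.mp h1
      constructor <;> [linarith [this.1]; linarith [this.2, Real.pi_pos]]
    refine ⟨_, ⟨nc (r • φ.toLinearMap) (Real.pi/2), Submodule.subset_span ⟨_, _, rfl⟩, rfl⟩, ?_⟩
    simp only [nc, ContinuousMap.coe_mk, LinearMap.smul_apply, ContinuousLinearMap.coe_coe,
      smul_eq_mul]
    intro heq
    have hmem1 := hbound a (by linarith [abs_nonneg b])
    have hmem2 := hbound b (by linarith [abs_nonneg a])
    have := Real.injOn_cos hmem1 hmem2 heq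
    have : a = b := by
      have h2 : r * a = r * b := by linarith
      exact mul_left_cancel₀ (ne_of_gt hrpos) h2
    exact hab this
  have htop : A.topologicalClosure = ⊤ :=
    ContinuousMap.subalgebra_topologicalClosure_eq_top_of_separatesPoints A hsep
  set gK : C(K, ℝ) := ⟨fun x => g x, hg.comp continuous_subtype_val⟩ with hgK
  have hmemtop : gK ∈ A.topologicalClosure := by rw [htop]; trivial
  have hcl : gK ∈ closure (A : Set C(K, ℝ)) := hmemtop
  obtain ⟨F, hFA, hdist⟩ := Metric.mem_closure_iff.mp hcl ε hε
  have hFS : F ∈ S := hFA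
  obtain ⟨M, c, Fi, hsum⟩ := Submodule.mem_span_set'.mp hFS
  choose ℓ θ hℓθ using fun i => (Fi i).2
  refine ⟨M, c, ℓ, θ, fun x hx => ?_⟩
  have hFx : F ⟨x, hx⟩ = ∑ i, c i * Real.cos (ℓ i x + θ i) := by
    rw [← hsum]
    rw [ContinuousMap.sum_apply]
    refine Finset.sum_congr rfl fun i _ => ?_
    rw [ContinuousMap.smul_apply, hℓθ i]
    simp [nc]
  have : |g x - F ⟨x, hx⟩| ≤ ε := by
    have h1 : g x = gK ⟨x, hx⟩ := rfl
    rw [h1, ← Real.dist_eq]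
    exact le_of_lt (lt_of_le_of_lt (ContinuousMap.dist_apply_le_dist _) hdist)
  rwa [hFx] at this

end SW


section RealUAT

variable {ψ : ℝ → ℝ} {K : Set (Fin N → EuclideanSpace ℝ (Fin n))}

lemma cos_neuron_rapprox (hTW : IsTauberWiener ψ) (hK : IsCompact K)
    (ℓ : (Fin N → EuclideanSpace ℝ (Fin n)) →ₗ[ℝ] ℝ) (θ : ℝ) (δ : ℝ) (hδ : 0 < δ) :
    RApprox ψ K (fun x => Real.cos (ℓ x + θ)) δ := by
  have hcont : Continuous fun x : Fin N → EuclideanSpace ℝ (Fin n) => ℓ x + θ :=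
    (ℓ.continuous_of_finiteDimensional).add continuous_const
  obtain ⟨R, hR⟩ := hK.exists_bound_of_continuousOn hcont.continuousOn
  obtain ⟨M, α, w, θ', hTW'⟩ := hTW Real.cos Real.continuous_cos (-R) R δ hδ
  refine ⟨M, α, fun i => w i • ℓ, fun i => w i * θ + θ' i, fun x hx => ?_⟩
  have harg : ∀ i : Fin M, (w i • ℓ) x + (w i * θ + θ' i) = w i * (ℓ x + θ) + θ' i := by
    intro i; simp only [LinearMap.smul_apply, smul_eq_mul]; ring
  simp only [harg]
  exact hTW' _ (abs_le.mp (by simpa [Real.norm_eq_abs] using hR x hx))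

lemma real_UAT (hTW : IsTauberWiener ψ) (hK : IsCompact K)
    (g : (Fin N → EuclideanSpace ℝ (Fin n)) → ℝ) (hg : Continuous g) (ε : ℝ) (hε : 0 < ε) :
    RApprox ψ K g ε := by
  obtain ⟨M, c, ℓ, θ, hcos⟩ := cos_dense K hK g hg (ε/2) (half_pos hε)
  set S := ∑ i, |c i| with hSdef
  have hS : 0 ≤ S := Finset.sum_nonneg fun i _ => abs_nonneg _
  set δ := ε / (2 * (S + 1)) with hδdef
  have hδ : 0 < δ := by positivity
  have h1 : ∀ i, RApprox ψ K (fun x => c i * Real.cos (ℓ i x + θ i)) (|c i| * δ) :=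
    fun i => (cos_neuron_rapprox hTW hK (ℓ i) (θ i) δ hδ).const_mul (c i)
  have h2 := RApprox.sum (ψ := ψ) (K := K) Finset.univ
    (fun i x => c i * Real.cos (ℓ i x + θ i)) (fun i => |c i| * δ) (fun i _ => h1 i)
  have h3 := h2.close (g := g) fun x hx => hcos x hx
  refine h3.mono ?_
  have hsum : ∑ i, |c i| * δ = S * δ := by rw [hSdef, Finset.sum_mul]
  have hle : S * δ ≤ ε / 2 := by
    have key : (S + 1) * δ = ε / 2 := by
      rw [hδdef]; field_simp
    nlinarith
  rw [hsum]
  linarith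

end RealUAT


section Hyper

variable (μ : EuclideanSpace ℝ (Fin n) →ₗ[ℝ] EuclideanSpace ℝ (Fin n) →ₗ[ℝ] EuclideanSpace ℝ (Fin n))
variable (Ψ : EuclideanSpace ℝ (Fin n) → EuclideanSpace ℝ (Fin n))
variable (K : Set (Fin N → EuclideanSpace ℝ (Fin n)))

/-- hypercomplex network approximability on `K` -/
def HApprox (F : (Fin N → EuclideanSpace ℝ (Fin n)) → EuclideanSpace ℝ (Fin n)) (ε : ℝ) : Prop :=
  ∃ M : ℕ, ∃ (α : Fin M → EuclideanSpace ℝ (Fin n))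
    (w : Fin M → Fin N → EuclideanSpace ℝ (Fin n)) (b : Fin M → EuclideanSpace ℝ (Fin n)),
    ∀ x ∈ K, ‖(∑ i, μ (α i) (Ψ ((∑ j, μ (w i j) (x j)) + b i))) - F x‖ ≤ ε

variable {μ Ψ K}

lemma HApprox.mono {F ε₁ ε₂} (h : HApprox μ Ψ K F ε₁) (hle : ε₁ ≤ ε₂) : HApprox μ Ψ K F ε₂ := by
  obtain ⟨M, a, w, b, h⟩ := h
  exact ⟨M, a, w, b, fun x hx => (h x hx).trans hle⟩

lemma HApprox.zero : HApprox μ Ψ K (fun _ => (0 : EuclideanSpace ℝ (Fin n))) 0 :=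
  ⟨0, ![], ![], ![], fun x _ => by simp⟩

lemma HApprox.add {F₁ F₂ ε₁ ε₂} (h₁ : HApprox μ Ψ K F₁ ε₁) (h₂ : HApprox μ Ψ K F₂ ε₂) :
    HApprox μ Ψ K (fun x => F₁ x + F₂ x) (ε₁ + ε₂) := by
  obtain ⟨M₁, a₁, w₁, b₁, h₁⟩ := h₁
  obtain ⟨M₂, a₂, w₂, b₂, h₂⟩ := h₂
  refine ⟨M₁ + M₂, Fin.append a₁ a₂, Fin.append w₁ w₂, Fin.append b₁ b₂, fun x hx => ?_⟩
  have hs : (∑ i : Fin (M₁ + M₂), μ (Fin.append a₁ a₂ i)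
        (Ψ ((∑ j, μ (Fin.append w₁ w₂ i j) (x j)) + Fin.append b₁ b₂ i)))
      = (∑ i : Fin M₁, μ (a₁ i) (Ψ ((∑ j, μ (w₁ i j) (x j)) + b₁ i)))
        + ∑ i : Fin M₂, μ (a₂ i) (Ψ ((∑ j, μ (w₂ i j) (x j)) + b₂ i)) := by
    rw [Fin.sum_univ_add]
    simp [Fin.append_left, Fin.append_right]
  rw [hs]
  have key : (∑ i : Fin M₁, μ (a₁ i) (Ψ ((∑ j, μ (w₁ i j) (x j)) + b₁ i)))
        + (∑ i : Fin M₂, μ (a₂ i) (Ψ ((∑ j, μ (w₂ i j) (x j)) + b₂ i))) - (F₁ x + F₂ x)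
      = ((∑ i : Fin M₁, μ (a₁ i) (Ψ ((∑ j, μ (w₁ i j) (x j)) + b₁ i))) - F₁ x)
        + ((∑ i : Fin M₂, μ (a₂ i) (Ψ ((∑ j, μ (w₂ i j) (x j)) + b₂ i))) - F₂ x) := by
    abel
  rw [key]
  exact (norm_add_le _ _).trans (add_le_add (h₁ x hx) (h₂ x hx))

lemma HApprox.sum {ι : Type*} (s : Finset ι)
    (F : ι → (Fin N → EuclideanSpace ℝ (Fin n)) → EuclideanSpace ℝ (Fin n))
    (ε : ι → ℝ) (h : ∀ i ∈ s, HApprox μ Ψ K (F i) (ε i)) :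
    HApprox μ Ψ K (fun x => ∑ i ∈ s, F i x) (∑ i ∈ s, ε i) := by
  classical
  induction s using Finset.induction_on with
  | empty => simpa using HApprox.zero
  | insert a s hni ih =>
    simp only [Finset.sum_insert hni]
    exact (h a (Finset.mem_insert_self a s)).add
      (ih fun i hi => h i (Finset.mem_insert_of_mem hi))

lemma HApprox.close {F G ε₁ δ} (hh : HApprox μ Ψ K G ε₁)
    (hgh : ∀ x ∈ K, ‖F x - G x‖ ≤ δ) : HApprox μ Ψ K F (ε₁ + δ) := by
  obtain ⟨M, a, w, b, hh⟩ := hh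
  refine ⟨M, a, w, b, fun x hx => ?_⟩
  have key : (∑ i, μ (a i) (Ψ ((∑ j, μ (w i j) (x j)) + b i))) - F x
      = ((∑ i, μ (a i) (Ψ ((∑ j, μ (w i j) (x j)) + b i))) - G x) - (F x - G x) := by abel
  rw [key]
  exact (norm_sub_le _ _).trans (add_le_add (hh x hx) (hgh x hx))

/-- the coordinate functional on Euclidean space -/
def coordL (k : Fin n) : EuclideanSpace ℝ (Fin n) →ₗ[ℝ] ℝ where
  toFun v := v k
  map_add' _ _ := rfl
  map_smul' _ _ := rfl

lemma exists_rep (k : Fin n)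
    (hnd2 : ∀ x : EuclideanSpace ℝ (Fin n), (∀ y, μ x y k = 0) → x = 0)
    (ℓ : EuclideanSpace ℝ (Fin n) →ₗ[ℝ] ℝ) : ∃ w, ∀ y, μ w y k = ℓ y := by
  let Φ : EuclideanSpace ℝ (Fin n) →ₗ[ℝ] Module.Dual ℝ (EuclideanSpace ℝ (Fin n)) :=
    { toFun := fun w => (coordL k).comp (μ w)
      map_add' := by intro a b; ext y; simp [coordL, map_add]
      map_smul' := by intro c a; ext y; simp [coordL, map_smul] }
  have hker : ∀ w, Φ w = 0 → w = 0 := by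
    intro w hw
    exact hnd2 w fun y => LinearMap.congr_fun hw y
  have hinj : Function.Injective Φ := LinearMap.ker_eq_bot.mp (LinearMap.ker_eq_bot'.mpr hker)
  have hsurj : Function.Surjective Φ :=
    (LinearMap.injective_iff_surjective_of_finrank_eq_finrank
      (Subspace.dual_finrank_eq).symm).mp hinj
  obtain ⟨w, hw⟩ := hsurj ℓ
  exact ⟨w, fun y => LinearMap.congr_fun hw y⟩


variable {ψ : ℝ → ℝ}

lemma happrox_neuron (hK : IsCompact K)
    (hnd : ∀ k : Fin n, (∀ x : EuclideanSpace ℝ (Fin n), (∀ y, μ x y k = 0) → x = 0))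
    (one : EuclideanSpace ℝ (Fin n))
    (hone : ∀ x : EuclideanSpace ℝ (Fin n), μ one x = x)
    (hlim : Tendsto ψ atBot (nhds 0) ∨ Tendsto ψ atTop (nhds 0))
    (hΨ : ∀ (x : EuclideanSpace ℝ (Fin n)) (k : Fin n), Ψ x k = ψ (x k))
    (k : Fin n) (c : ℝ) (ℓ : (Fin N → EuclideanSpace ℝ (Fin n)) →ₗ[ℝ] ℝ) (θ : ℝ)
    (δ : ℝ) (hδ : 0 < δ) :
    HApprox μ Ψ K (fun x => (c * ψ (ℓ x + θ)) • EuclideanSpace.single k (1:ℝ))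
      (Real.sqrt n * (|c| * δ)) := by
  classical
  -- inner weights
  have hrep : ∀ j : Fin N, ∃ w, ∀ y, μ w y k
      = ℓ.comp (LinearMap.single ℝ (fun _ : Fin N => EuclideanSpace ℝ (Fin n)) j) y :=
    fun j => exists_rep k (hnd k) _
  choose w hw using hrep
  set z : (Fin N → EuclideanSpace ℝ (Fin n)) → EuclideanSpace ℝ (Fin n) :=
    fun x => ∑ j, μ (w j) (x j) with hz
  have hzk : ∀ x, z x k = ℓ x := by
    intro x
    have h1 : coordL k (z x) = ∑ j, coordL k (μ (w j) (x j)) := by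
      rw [hz]; exact map_sum (coordL k) _ _
    have h2 : ∀ j, coordL k (μ (w j) (x j)) = ℓ (Pi.single j (x j)) := by
      intro j
      have := hw j (x j)
      exact this
    have h3 : coordL k (z x) = ℓ x := by
      rw [h1]
      calc ∑ j, coordL k (μ (w j) (x j)) = ∑ j, ℓ (Pi.single j (x j)) := by
            exact Finset.sum_congr rfl fun j _ => h2 j
        _ = ℓ (∑ j, Pi.single j (x j)) := (map_sum ℓ _ _).symm
        _ = ℓ x := by rw [Finset.univ_sum_single]
    exact h3
  -- bound for z on K
  have hzc : Continuous z := by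
    rw [hz]
    exact continuous_finset_sum _ fun j _ =>
      ((μ (w j)).continuous_of_finiteDimensional).comp (continuous_apply j)
  obtain ⟨C₀, hC₀⟩ := hK.exists_bound_of_continuousOn hzc.continuousOn
  set C := max C₀ 0 with hC
  have hCnn : 0 ≤ C := le_max_right _ _
  have hCb : ∀ x ∈ K, ∀ m, |z x m| ≤ C := fun x hx m =>
    (euclid_abs_coord_le _ m).trans ((hC₀ x hx).trans (le_max_left _ _))
  -- bias
  have hbias : ∃ b : EuclideanSpace ℝ (Fin n), b k = θ ∧
      ∀ x ∈ K, ∀ m, m ≠ k → |ψ (z x m + b m)| ≤ δ := by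
    rcases hlim with h | h
    · obtain ⟨T, hT⟩ := eventually_atBot.mp (h.eventually (Metric.closedBall_mem_nhds (0:ℝ) hδ))
      refine ⟨WithLp.toLp 2 (fun m => if m = k then θ else T - C : Fin n → ℝ), if_pos rfl, fun x hx m hm => ?_⟩
      have harg : z x m + (if m = k then θ else T - C) ≤ T := by
        rw [if_neg hm]
        have := (abs_le.mp (hCb x hx m)).2
        linarith
      have := hT _ harg
      simpa [Metric.mem_closedBall, Real.dist_eq] using this
    · obtain ⟨T, hT⟩ := eventually_atTop.mp (h.eventually (Metric.closedBall_mem_nhds (0:ℝ) hδ))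
      refine ⟨WithLp.toLp 2 (fun m => if m = k then θ else T + C : Fin n → ℝ), if_pos rfl, fun x hx m hm => ?_⟩
      have harg : T ≤ z x m + (if m = k then θ else T + C) := by
        rw [if_neg hm]
        have := (abs_le.mp (hCb x hx m)).1
        linarith
      have := hT _ harg
      simpa [Metric.mem_closedBall, Real.dist_eq] using this
  obtain ⟨b, hbk, hbs⟩ := hbias
  refine ⟨1, (fun _ => c • one), (fun _ => w), (fun _ => b), fun x hx => ?_⟩
  have hnet : (∑ i : Fin 1, μ ((fun _ : Fin 1 => c • one) i)
      (Ψ ((∑ j, μ ((fun _ : Fin 1 => w) i j) (x j)) + (fun _ : Fin 1 => b) i)))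
      = c • Ψ (z x + b) := by
    rw [Fin.sum_univ_one]
    have h1 : μ (c • one) = c • μ one := map_smul μ c one
    rw [h1]
    rw [LinearMap.smul_apply, hone]
  rw [hnet]
  set u := Ψ (z x + b) with hu
  have hum : ∀ m, u m = ψ (z x m + b m) := fun m => by
    rw [hu, hΨ, PiLp.add_apply]
  have hcoord : ∀ m, |(c • u - (c * ψ (ℓ x + θ)) • EuclideanSpace.single k (1:ℝ)) m| ≤ |c| * δ := by
    intro m
    have hd : (c • u - (c * ψ (ℓ x + θ)) • EuclideanSpace.single k (1:ℝ)) m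
        = c * u m - (c * ψ (ℓ x + θ)) * (EuclideanSpace.single k (1:ℝ)) m := by
      simp [PiLp.sub_apply, PiLp.smul_apply, smul_eq_mul]
    by_cases hmk : m = k
    · subst hmk
      rw [hd, hum, EuclideanSpace.single_apply, if_pos rfl, hbk, hzk]
      have : c * ψ (ℓ x + θ) - c * ψ (ℓ x + θ) * 1 = 0 := by ring
      rw [this, abs_zero]
      positivity
    · rw [hd, hum, EuclideanSpace.single_apply, if_neg hmk]
      simp only [mul_zero, sub_zero, abs_mul]
      exact mul_le_mul_of_nonneg_left (hbs x hx m hmk) (abs_nonneg c)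
  exact euclid_norm_le_of_coord _ (|c| * δ) (by positivity) hcoord

end Hyper


end UAT

/-- Universal approximation theorem for hypercomplex-valued MLP networks (with
vector-valued output weights), on a non-degenerate algebra with a two-sided identity. -/
theorem universal_approximation_hypercomplex_MLP
    (n N : ℕ) (hn : 1 ≤ n) (hN : 1 ≤ N)
    (μ : EuclideanSpace ℝ (Fin n) →ₗ[ℝ] EuclideanSpace ℝ (Fin n) →ₗ[ℝ] EuclideanSpace ℝ (Fin n))
    (hnd : ∀ k : Fin n,
      (∀ y : EuclideanSpace ℝ (Fin n), (∀ x, μ x y k = 0) → y = 0) ∧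
      (∀ x : EuclideanSpace ℝ (Fin n), (∀ y, μ x y k = 0) → x = 0))
    (one : EuclideanSpace ℝ (Fin n))
    (hone : ∀ x : EuclideanSpace ℝ (Fin n), μ one x = x ∧ μ x one = x)
    (ψ : ℝ → ℝ) (hTW : IsTauberWiener ψ)
    (hlim : Tendsto ψ atBot (nhds 0) ∨ Tendsto ψ atTop (nhds 0))
    (Ψ : EuclideanSpace ℝ (Fin n) → EuclideanSpace ℝ (Fin n))
    (hΨ : ∀ (x : EuclideanSpace ℝ (Fin n)) (k : Fin n), Ψ x k = ψ (x k))
    (K : Set (Fin N → EuclideanSpace ℝ (Fin n))) (hK : IsCompact K)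
    (f : (Fin N → EuclideanSpace ℝ (Fin n)) → EuclideanSpace ℝ (Fin n)) (hf : Continuous f)
    (ε : ℝ) (hε : 0 < ε) :
    ∃ M : ℕ, ∃ α : Fin M → EuclideanSpace ℝ (Fin n),
      ∃ w : Fin M → Fin N → EuclideanSpace ℝ (Fin n),
      ∃ b : Fin M → EuclideanSpace ℝ (Fin n),
        ∀ x ∈ K,
          ‖(∑ i, μ (α i) (Ψ ((∑ j, μ (w i j) (x j)) + b i))) - f x‖ ≤ ε := by
  classical
  have hnpos : (0:ℝ) < n := by exact_mod_cast hn
  have key : ∀ k : Fin n,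
      HApprox μ Ψ K (fun x => (f x k) • EuclideanSpace.single k (1:ℝ)) (ε / n) := by
    intro k
    have hgk : Continuous fun x => f x k := (continuous_apply k).comp ((PiLp.continuous_ofLp 2 _).comp hf)
    obtain ⟨M, c, ℓ, θ, hreal⟩ := real_UAT hTW hK _ hgk (ε / (2 * n)) (by positivity)
    set S := ∑ i, |c i| with hS
    have hSnn : 0 ≤ S := Finset.sum_nonneg fun i _ => abs_nonneg _
    have hsq : 0 < Real.sqrt n := Real.sqrt_pos.mpr hnpos
    set δ := ε / (2 * n * (Real.sqrt n * S + 1)) with hδdef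
    have hδ : 0 < δ := by positivity
    have hne : ∀ i : Fin M, HApprox μ Ψ K
        (fun x => (c i * ψ (ℓ i x + θ i)) • EuclideanSpace.single k (1:ℝ))
        (Real.sqrt n * (|c i| * δ)) :=
      fun i => happrox_neuron hK (fun k' => (hnd k').2) one (fun x => (hone x).1) hlim hΨ
        k (c i) (ℓ i) (θ i) δ hδ
    have hsum := HApprox.sum Finset.univ
      (fun i x => (c i * ψ (ℓ i x + θ i)) • EuclideanSpace.single k (1:ℝ))
      (fun i => Real.sqrt n * (|c i| * δ)) (fun i _ => hne i)
    have hclose : ∀ x ∈ K, ‖(f x k) • EuclideanSpace.single k (1:ℝ)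
        - ∑ i, (c i * ψ (ℓ i x + θ i)) • EuclideanSpace.single k (1:ℝ)‖ ≤ ε / (2 * n) := by
      intro x hx
      rw [← Finset.sum_smul, ← sub_smul, norm_smul, EuclideanSpace.norm_single]
      simp only [norm_one, mul_one, Real.norm_eq_abs]
      exact hreal x hx
    have htot := hsum.close hclose
    refine htot.mono ?_
    have h1 : ∑ i : Fin M, Real.sqrt n * (|c i| * δ) = Real.sqrt n * S * δ := by
      rw [hS, ← Finset.mul_sum, ← Finset.sum_mul, mul_assoc]
    have h2 : Real.sqrt n * S * δ ≤ ε / (2 * n) := by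
      have hkey : (Real.sqrt n * S + 1) * δ = ε / (2 * n) := by
        rw [hδdef]; field_simp
      nlinarith
    have h3 : ε / (2 * n) + ε / (2 * n) = ε / n := by field_simp; ring
    calc ∑ i : Fin M, (fun i => Real.sqrt n * (|c i| * δ)) i + ε / (2 * n)
        = Real.sqrt n * S * δ + ε / (2 * n) := by rw [← h1]
      _ ≤ ε / (2 * n) + ε / (2 * n) := by linarith
      _ = ε / n := h3
  have hsumk := HApprox.sum Finset.univ
    (fun k x => (f x k) • EuclideanSpace.single k (1:ℝ)) (fun _ => ε / n) (fun k _ => key k)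
  have hfinal := hsumk.close (F := f) (fun x hx => by
    show ‖f x - ∑ k, (f x k) • EuclideanSpace.single k (1:ℝ)‖ ≤ 0
    rw [euclid_sum_single (f x), sub_self, norm_zero])
  have htot : (∑ _k : Fin n, ε / n) + 0 = ε := by
    rw [Finset.sum_const, Finset.card_univ, Fintype.card_fin, nsmul_eq_mul, add_zero]
    field_simp
  exact htot ▸ hfinal
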